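/- Define f(t0,t1,t2) = n(n-4)(n-5) - t0(t0-1)(t0-2) - t1(t1-1)(t1-2) - t2(t2-1)(t2-2) - 3·t0·t1·t2, where n = t0+t1+t2. Then for all integers t0, t1, t2 ≥ 3, f(t0,t1,t2) ≥ 0, with f(3,3,3) = 81. -/
import Mathlib


/-- `f(t0,t1,t2) = n(n-4)(n-5) - Σ tᵢ(tᵢ-1)(tᵢ-2) - 3 t0 t1 t2` with `n = t0+t1+t2`. -/
def ffun (t0 t1 t2 : ℤ) : ℤ :=
  (t0 + t1 + t2) * (t0 + t1 + t2 - 4) * (t0 + t1 + t2 - 5)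
    - t0 * (t0 - 1) * (t0 - 2) - t1 * (t1 - 1) * (t1 - 2) - t2 * (t2 - 1) * (t2 - 2)
    - 3 * t0 * t1 * t2

theorem stmt6 :
    (∀ t0 t1 t2 : ℤ, 3 ≤ t0 → 3 ≤ t1 → 3 ≤ t2 → 0 ≤ ffun t0 t1 t2) ∧
    ffun 3 3 3 = 81 := by
  constructor
  · intro a b c ha hb hc
    unfold ffun
    nlinarith [mul_nonneg (sub_nonneg.2 ha) (sub_nonneg.2 hb),
      mul_nonneg (sub_nonneg.2 hb) (sub_nonneg.2 hc),
      mul_nonneg (sub_nonneg.2 ha) (sub_nonneg.2 hc),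
      mul_nonneg (mul_nonneg (sub_nonneg.2 ha) (sub_nonneg.2 hb)) (sub_nonneg.2 hc)]
  · decide
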